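/- (Validity of the Pythagorean definition of the acute angle via the principle of the Infinite.) Let θ be a real number with 0 < θ < π. Then θ < π / 2 if and only if there exists a natural number n with n even such that θ < ω n, where ω n := Real.arccos (1 - (q n)^2 / (2 * (p n)^2)). -/

import Mathlib

mutual
/-- The Pythagorean side numbers. -/
def p : ℕ → ℕ
  | 0 => 1
  | n + 1 => p n + q n
/-- The Pythagorean diameter numbers. -/
def q : ℕ → ℕ
  | 0 => 1
  | n + 1 => 2 * p n + q n
end

lemma pq_sq (n : ℕ) : (q n : ℤ) ^ 2 = 2 * (p n : ℤ) ^ 2 + (-1) ^ (n + 1) := by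
  induction n with
  | zero => simp [p, q]
  | succ n ih =>
    simp only [p, q]
    push_cast
    linear_combination -ih

lemma p_pos (n : ℕ) : 0 < p n := by
  induction n with
  | zero => simp [p]
  | succ n ih => simp [p]; omega

lemma q_pos (n : ℕ) : 0 < q n := by
  induction n with
  | zero => simp [q]
  | succ n ih => simp [q]; have := p_pos n; omega

lemma p_ge (n : ℕ) : n + 1 ≤ p n := by
  induction n with
  | zero => simp [p]
  | succ n ih => simp [p]; have := q_pos n; omega

lemma arg_eq (n : ℕ) (hn : Even n) :
    1 - ((q n : ℝ)) ^ 2 / (2 * ((p n : ℝ)) ^ 2) = 1 / (2 * ((p n : ℝ)) ^ 2) := by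
  have hp : (0:ℝ) < (p n : ℝ) := by exact_mod_cast p_pos n
  have h2 : (q n : ℝ) ^ 2 = 2 * (p n : ℝ) ^ 2 - 1 := by
    have := pq_sq n
    rw [hn.add_one.neg_one_pow] at this
    exact_mod_cast this
  rw [h2]
  field_simp
  ring

/-- The Pythagorean definition of the acute angle: an angle is acute iff it is less than
some ω n with n even. -/
theorem acute_iff_lt_omega_even (θ : ℝ) (h0 : 0 < θ) (hπ : θ < Real.pi) :
    θ < Real.pi / 2 ↔
      ∃ n : ℕ, Even n ∧ θ < Real.arccos (1 - ((q n : ℝ)) ^ 2 / (2 * ((p n : ℝ)) ^ 2)) := by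
  constructor
  · intro hθ
    have hc : 0 < Real.cos θ := Real.cos_pos_of_mem_Ioo ⟨by linarith [Real.pi_pos], hθ⟩
    obtain ⟨m, hm⟩ := exists_nat_gt (1 / Real.cos θ)
    refine ⟨2 * m, even_two_mul m, ?_⟩
    rw [arg_eq _ (even_two_mul m)]
    have hp : (0:ℝ) < (p (2*m) : ℝ) := by exact_mod_cast p_pos (2*m)
    have hpm : (m : ℝ) < (p (2*m) : ℝ) := by
      have := p_ge (2*m); exact_mod_cast by omega
    have harg : 1 / (2 * ((p (2*m) : ℝ)) ^ 2) < Real.cos θ := by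
      rw [div_lt_iff₀ (by positivity)]
      have h1 : 1 / Real.cos θ < (p (2*m) : ℝ) := lt_of_le_of_lt hm.le hpm
      have h2 : 1 < Real.cos θ * (p (2*m) : ℝ) := by
        rw [div_lt_iff₀ hc] at h1; linarith [mul_comm (p (2*m) : ℝ) (Real.cos θ)]
      have hone : (1:ℝ) ≤ (p (2*m) : ℝ) := by exact_mod_cast p_pos (2*m)
      have h3 : 0 ≤ Real.cos θ * (2 * ((p (2*m) : ℝ))^2 - (p (2*m) : ℝ)) := by
        apply mul_nonneg hc.le; nlinarith
      nlinarith
    calc θ = Real.arccos (Real.cos θ) := (Real.arccos_cos h0.le hπ.le).symm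
      _ < Real.arccos (1 / (2 * ((p (2*m) : ℝ)) ^ 2)) := by
          have hone : (1:ℝ) ≤ (p (2*m) : ℝ) := by exact_mod_cast p_pos (2*m)
          have hub : 1 / (2 * ((p (2*m) : ℝ)) ^ 2) ≤ 1 := by
            rw [div_le_one (by positivity)]; nlinarith
          exact Real.strictAntiOn_arccos
            ⟨le_trans (by norm_num) (le_of_lt (by positivity : (0:ℝ) < 1 / (2 * ((p (2*m) : ℝ)) ^ 2))), hub⟩
            ⟨Real.neg_one_le_cos θ, Real.cos_le_one θ⟩ harg
  · rintro ⟨n, hn, hθ⟩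
    refine lt_trans hθ ?_
    rw [arg_eq n hn]
    rw [Real.arccos_lt_pi_div_two]
    have hp : (0:ℝ) < (p n : ℝ) := by exact_mod_cast p_pos n
    positivity
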